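/- Let k ≥ 2 and n be positive integers with Ω(2^n − 1) < log n / log k, where Ω counts prime factors with multiplicity. Then there exists a prime q dividing 2^n − 1 such that no sum ε₁·2^{s₁} + ⋯ + ε_k·2^{s_k} with ε_i ∈ {0,1}, not all zero, and nonnegative integers s_i, is divisible by q. -/

import Mathlib

private lemma pow_modeq (n a : ℕ) (hn : 0 < n) :
    (2:ℕ)^a ≡ 2^(a % n) [MOD 2^n - 1] := by
  conv_lhs => rw [← Nat.div_add_mod a n]
  rw [pow_add, pow_mul]
  have h1 : (2:ℕ)^n ≡ 1 [MOD 2^n - 1] := by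
    rw [Nat.ModEq.comm, Nat.modEq_iff_dvd' Nat.one_le_two_pow]
  calc ((2:ℕ)^n)^(a/n) * 2^(a%n) ≡ 1^(a/n) * 2^(a%n) [MOD 2^n-1] :=
        (h1.pow _).mul_right _
    _ = 2^(a%n) := by ring

private lemma sum_modeq (n : ℕ) (hn : 0 < n) (m : Multiset ℕ) :
    (m.map (fun e => (2:ℕ)^e)).sum ≡ (m.map (fun e => (2:ℕ)^(e % n))).sum [MOD 2^n - 1] := by
  induction m using Multiset.induction_on with
  | empty => simp; rfl
  | cons a s ih =>
    simp only [Multiset.map_cons, Multiset.sum_cons]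
    exact (pow_modeq n a hn).add ih

private lemma geomsum (n : ℕ) : (∑ i ∈ Finset.range n, (2:ℕ)^i) = 2^n - 1 := by
  induction n with
  | zero => simp
  | succ n ih =>
    rw [Finset.sum_range_succ, ih, pow_succ]
    have := Nat.one_le_two_pow (n := n)
    omega

private lemma keyA' (n : ℕ) (hn : 0 < n) : ∀ t, ∀ m : Multiset ℕ, m.card = t →
    (∀ e ∈ m, e < n) → (2^n - 1) ∣ (m.map (fun e => (2:ℕ)^e)).sum →
    (m.map (fun e => (2:ℕ)^e)).sum ≠ 0 → n ≤ t := by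
  intro t
  induction t using Nat.strong_induction_on with
  | _ t ih =>
    intro m hcard hlt hdvd hne
    by_cases hnodup : m.Nodup
    · -- all distinct: sum is a positive multiple of 2^n-1 below 2^n
      set A : Finset ℕ := ⟨m, hnodup⟩ with hA
      have hsub : A ⊆ Finset.range n := by
        intro a ha
        exact Finset.mem_range.mpr (hlt a ha)
      have hsumA : (∑ a ∈ A, (2:ℕ)^a) = (m.map (fun e => (2:ℕ)^e)).sum := rfl
      have hle : (∑ a ∈ A, (2:ℕ)^a) ≤ 2^n - 1 := by
        rw [← geomsum]
        exact Finset.sum_le_sum_of_subset hsub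
      have hge : 2^n - 1 ≤ (∑ a ∈ A, (2:ℕ)^a) := by
        rw [hsumA]
        exact Nat.le_of_dvd (Nat.pos_of_ne_zero hne) hdvd
      have heq : A = Finset.range n := by
        by_contra hne2
        obtain ⟨b, hb, hbn⟩ := Finset.exists_of_ssubset (hsub.ssubset_of_ne hne2)
        have : (∑ a ∈ A, (2:ℕ)^a) < ∑ a ∈ Finset.range n, (2:ℕ)^a :=
          Finset.sum_lt_sum_of_subset hsub hb hbn (by positivity)
            (fun _ _ _ => Nat.zero_le _)
        rw [geomsum] at this
        omega
      have : A.card = n := by rw [heq, Finset.card_range]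
      have : m.card = n := this
      omega
    · -- a duplicate exists: merge it
      rw [Multiset.nodup_iff_count_le_one] at hnodup
      push_neg at hnodup
      obtain ⟨a, ha⟩ := hnodup
      have ha1 : a ∈ m := by
        rw [← Multiset.count_pos]; omega
      have ha2 : a ∈ m.erase a := by
        rw [← Multiset.count_pos, Multiset.count_erase_self]; omega
      set m'' := (m.erase a).erase a with hm''
      have hm1 : m.erase a = a ::ₘ m'' := (Multiset.cons_erase ha2).symm
      have hm0 : m = a ::ₘ a ::ₘ m'' := by
        rw [← hm1]; exact (Multiset.cons_erase ha1).symm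
      set m2 : Multiset ℕ := ((a+1) % n) ::ₘ m'' with hm2
      have hcard2 : m2.card = t - 1 := by
        have : m.card = m''.card + 2 := by rw [hm0]; simp
        simp only [hm2, Multiset.card_cons]
        omega
      have ht2 : 2 ≤ t := by
        have : m.card = m''.card + 2 := by rw [hm0]; simp
        omega
      have hsum0 : (m.map (fun e => (2:ℕ)^e)).sum
          = 2^(a+1) + (m''.map (fun e => (2:ℕ)^e)).sum := by
        rw [hm0]; simp [Multiset.sum_cons]; ring
      have hsum2 : (m2.map (fun e => (2:ℕ)^e)).sum
          = 2^((a+1) % n) + (m''.map (fun e => (2:ℕ)^e)).sum := by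
        simp [hm2, Multiset.sum_cons]
      have hcong : (m.map (fun e => (2:ℕ)^e)).sum ≡ (m2.map (fun e => (2:ℕ)^e)).sum [MOD 2^n-1] := by
        rw [hsum0, hsum2]
        exact (pow_modeq n (a+1) hn).add_right _
      have hdvd2 : (2^n - 1) ∣ (m2.map (fun e => (2:ℕ)^e)).sum := by
        have := (Nat.modEq_zero_iff_dvd.mpr hdvd).symm.trans hcong
        exact Nat.modEq_zero_iff_dvd.mp this.symm
      have hne2 : (m2.map (fun e => (2:ℕ)^e)).sum ≠ 0 := by
        rw [hsum2]
        positivity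
      have hlt2 : ∀ e ∈ m2, e < n := by
        intro e he
        rw [hm2, Multiset.mem_cons] at he
        rcases he with rfl | he
        · exact Nat.mod_lt _ hn
        · exact hlt e (by rw [hm0]; simp [Multiset.mem_cons, he])
      have := ih (t-1) (by omega) m2 hcard2 hlt2 hdvd2 hne2
      omega

private lemma keyA (n : ℕ) (hn : 0 < n) (m : Multiset ℕ)
    (hdvd : (2^n - 1) ∣ (m.map (fun e => (2:ℕ)^e)).sum)
    (hne : (m.map (fun e => (2:ℕ)^e)).sum ≠ 0) : n ≤ m.card := by
  set m' := m.map (· % n) with hm'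
  have hcong := sum_modeq n hn m
  have hmm : (m.map (fun e => (2:ℕ)^(e % n))).sum = (m'.map (fun e => (2:ℕ)^e)).sum := by
    rw [hm', Multiset.map_map]; rfl
  rw [hmm] at hcong
  have hdvd' : (2^n - 1) ∣ (m'.map (fun e => (2:ℕ)^e)).sum := by
    have := (Nat.modEq_zero_iff_dvd.mpr hdvd).symm.trans hcong
    exact Nat.modEq_zero_iff_dvd.mp this.symm
  have hne' : (m'.map (fun e => (2:ℕ)^e)).sum ≠ 0 := by
    intro h
    rw [hm'] at h
    simp only [Multiset.map_map] at h
    rcases Multiset.empty_or_exists_mem m with rfl | ⟨a, ha⟩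
    · simp at hne
    · have : (0:ℕ) < (m.map (fun e => (2:ℕ)^(e % n))).sum := by
        have h1 : (2:ℕ)^(a % n) ≤ (m.map (fun e => (2:ℕ)^(e % n))).sum :=
          Multiset.le_sum_of_mem (Multiset.mem_map_of_mem (fun e => (2:ℕ)^(e % n)) ha)
        have := Nat.one_le_two_pow (n := a % n)
        omega
      rw [hmm] at this
      rw [hm'] at this
      simp only [Multiset.map_map] at this
      omega
  have hlt' : ∀ e ∈ m', e < n := by
    intro e he
    rw [hm'] at he
    obtain ⟨b, _, rfl⟩ := Multiset.mem_map.mp he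
    exact Nat.mod_lt _ hn
  have hcard : m'.card = m.card := by rw [hm', Multiset.card_map]
  exact keyA' n hn m.card m' hcard hlt' hdvd' hne'

private lemma combine (m1 m2 : Multiset ℕ) :
    ((m1 ×ˢ m2).map (fun p => (2:ℕ)^(p.1 + p.2))).sum
      = (m1.map (fun e => (2:ℕ)^e)).sum * (m2.map (fun e => (2:ℕ)^e)).sum := by
  induction m1 using Multiset.induction_on with
  | empty => simp
  | cons a s ih =>
    rw [Multiset.cons_product, Multiset.map_add, Multiset.sum_add, ih,
      Multiset.map_map, Multiset.map_cons, Multiset.sum_cons, add_mul]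
    congr 1
    have : ((2:ℕ)^(a) * (m2.map (fun e => (2:ℕ)^e)).sum)
        = (m2.map (fun e => (2:ℕ)^a * (2:ℕ)^e)).sum := by
      rw [Multiset.sum_map_mul_left]
    rw [this]
    congr 1
    ext b
    simp [pow_add]

private lemma listLemma (k : ℕ) : ∀ L : List ℕ,
    (∀ q ∈ L, ∃ m : Multiset ℕ, m.card ≤ k ∧ (m.map (fun e => (2:ℕ)^e)).sum ≠ 0 ∧
      q ∣ (m.map (fun e => (2:ℕ)^e)).sum) →
    ∃ m : Multiset ℕ, m.card ≤ k ^ L.length ∧ (m.map (fun e => (2:ℕ)^e)).sum ≠ 0 ∧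
      L.prod ∣ (m.map (fun e => (2:ℕ)^e)).sum := by
  intro L
  induction L with
  | nil =>
    intro _
    exact ⟨{0}, by simp, by simp, by simp⟩
  | cons q L ih =>
    intro h
    obtain ⟨m1, hc1, hne1, hd1⟩ := h q List.mem_cons_self
    obtain ⟨m2, hc2, hne2, hd2⟩ := ih (fun r hr => h r (List.mem_cons_of_mem _ hr))
    refine ⟨(m1 ×ˢ m2).map (fun p => p.1 + p.2), ?_, ?_, ?_⟩
    · rw [Multiset.card_map, Multiset.card_product, List.length_cons, pow_succ]
      calc m1.card * m2.card ≤ k * k ^ L.length := Nat.mul_le_mul hc1 hc2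
        _ = k ^ L.length * k := by ring
    · rw [Multiset.map_map]
      show ((m1 ×ˢ m2).map (fun p => (2:ℕ)^(p.1 + p.2))).sum ≠ 0
      rw [combine]
      exact Nat.mul_ne_zero hne1 hne2
    · rw [Multiset.map_map]
      show (q * L.prod) ∣ ((m1 ×ˢ m2).map (fun p => (2:ℕ)^(p.1 + p.2))).sum
      rw [combine]
      exact mul_dvd_mul hd1 hd2

theorem stmt_1 (k n : ℕ) (hk : 2 ≤ k) (hn : 0 < n)
    (hΩ : ((2 ^ n - 1).primeFactorsList.length : ℝ) < Real.log n / Real.log k) :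
    ∃ q : ℕ, q.Prime ∧ q ∣ 2 ^ n - 1 ∧
      ∀ (ε : Fin k → ℕ) (s : Fin k → ℕ), (∀ i, ε i ≤ 1) → (∃ i, ε i = 1) →
        ¬ q ∣ ∑ i, ε i * 2 ^ s i := by
  set N := 2^n - 1 with hN
  set Ω := N.primeFactorsList.length with hΩdef
  -- k ^ Ω < n
  have hlogk : 0 < Real.log k := Real.log_pos (by exact_mod_cast hk)
  have hkΩ : (k:ℝ) ^ Ω < (n:ℝ) := by
    have h1 : (Ω:ℝ) * Real.log k < Real.log n := by
      rw [← lt_div_iff₀ hlogk]; exact hΩ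
    have h2 : Real.log ((k:ℝ) ^ Ω) < Real.log n := by
      rw [Real.log_pow]; exact_mod_cast h1
    have hpos : (0:ℝ) < (k:ℝ) ^ Ω := by positivity
    exact (Real.log_lt_log_iff hpos (by exact_mod_cast hn)).mp h2
  have hkΩn : k ^ Ω < n := by exact_mod_cast hkΩ
  by_contra hcon
  push_neg at hcon
  -- for each prime factor q, get a k-sum divisible by q
  have hfac : ∀ q ∈ N.primeFactorsList, ∃ m : Multiset ℕ, m.card ≤ k ∧
      (m.map (fun e => (2:ℕ)^e)).sum ≠ 0 ∧ q ∣ (m.map (fun e => (2:ℕ)^e)).sum := by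
    intro q hq
    have hqp : q.Prime := Nat.prime_of_mem_primeFactorsList hq
    have hqd : q ∣ N := Nat.dvd_of_mem_primeFactorsList hq
    obtain ⟨ε, s, hε, ⟨i₀, hi₀⟩, hdvd⟩ := hcon q hqp hqd
    set A : Finset (Fin k) := Finset.univ.filter (fun i => ε i = 1) with hA
    refine ⟨A.val.map s, ?_, ?_, ?_⟩
    · rw [Multiset.card_map]
      exact le_trans (Finset.card_filter_le _ _) (by simp)
    · have hsum : ((A.val.map s).map (fun e => (2:ℕ)^e)).sum = ∑ i ∈ A, (2:ℕ)^(s i) := by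
        rw [Multiset.map_map]; rfl
      rw [hsum]
      have hpos : (0:ℕ) < ∑ i ∈ A, (2:ℕ)^(s i) := by
        apply Finset.sum_pos (fun i _ => Nat.pow_pos (by norm_num))
        exact ⟨i₀, by simp [hA, hi₀]⟩
      omega
    · have hsum : ((A.val.map s).map (fun e => (2:ℕ)^e)).sum = ∑ i ∈ A, (2:ℕ)^(s i) := by
        rw [Multiset.map_map]; rfl
      rw [hsum]
      have : (∑ i, ε i * 2 ^ s i) = ∑ i ∈ A, (2:ℕ)^(s i) := by
        rw [hA, Finset.sum_filter]
        apply Finset.sum_congr rfl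
        intro i _
        have := hε i
        interval_cases h : ε i <;> simp [h]
      rwa [← this]
  obtain ⟨m, hcard, hne, hdvd⟩ := listLemma k N.primeFactorsList hfac
  have hN0 : N ≠ 0 := by
    have := Nat.one_le_two_pow (n := n)
    simp only [hN]
    have : (2:ℕ) ≤ 2^n := by
      calc (2:ℕ) = 2^1 := rfl
        _ ≤ 2^n := Nat.pow_le_pow_right (by norm_num) hn
    omega
  have hprod : N.primeFactorsList.prod = N := Nat.prod_primeFactorsList hN0
  rw [hprod] at hdvd
  have hfin := keyA n hn m hdvd hne
  rw [← hΩdef] at hcard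
  omega
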